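/- Let k ≥ 0 and let x = μ^k(z) where z ∈ {011011, 100100}. Then for every letter a ∈ {0,1}, the word xa contains an overlap (a 2⁺ power). -/

import Mathlib

/-- The Thue-Morse morphism: μ(0)=01, μ(1)=10, with 0 = `false`, 1 = `true`. -/
def mu (w : List Bool) : List Bool := w.flatMap fun b => [b, !b]

/-- `u` has period `p`: u(i) = u(i+p) for all valid indices. -/
def HasPeriod (u : List Bool) (p : ℕ) : Prop :=
  ∀ i, i + p < u.length → u.getD i false = u.getD (i + p) false

lemma mu_append (u v : List Bool) : mu (u ++ v) = mu u ++ mu v := by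
  simp [mu]

lemma muk_append (k : ℕ) (u v : List Bool) :
    mu^[k] (u ++ v) = mu^[k] u ++ mu^[k] v := by
  induction k generalizing u v with
  | zero => rfl
  | succ k ih => simp [Function.iterate_succ_apply, mu_append, ih]

lemma mu_length (u : List Bool) : (mu u).length = 2 * u.length := by
  induction u with
  | nil => rfl
  | cons b u ih => simp [mu] at ih ⊢; omega

lemma muk_length (k : ℕ) (u : List Bool) :
    (mu^[k] u).length = 2 ^ k * u.length := by
  induction k generalizing u with
  | zero => simp
  | succ k ih =>
    rw [Function.iterate_succ_apply, ih, mu_length, pow_succ]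
    ring

lemma muk_head (k : ℕ) (b : Bool) : ∃ t, mu^[k] [b] = b :: t := by
  induction k generalizing b with
  | zero => exact ⟨[], rfl⟩
  | succ k ih =>
    obtain ⟨t, ht⟩ := ih b
    refine ⟨t ++ mu^[k] [!b], ?_⟩
    rw [Function.iterate_succ_apply]
    show mu^[k] ([b] ++ [!b]) = _
    rw [muk_append, ht]; rfl

lemma hp (w s : List Bool) (hs : s <+: w) : HasPeriod (w ++ (w ++ s)) w.length := by
  obtain ⟨t, ht⟩ := hs
  intro i hi
  simp only [List.length_append] at hi
  have hsw : s.length ≤ w.length := by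
    subst ht; simp
  by_cases h : i < w.length
  · rw [List.getD_append _ _ _ _ h,
      List.getD_append_right _ _ _ _ (by omega : w.length ≤ i + w.length)]
    have : i + w.length - w.length = i := by omega
    rw [this, List.getD_append _ _ _ _ h]
  · have h1 : i < w.length + s.length := by omega
    have h2 : i - w.length < s.length := by omega
    rw [List.getD_append_right _ _ _ _ (by omega : w.length ≤ i),
      List.getD_append_right _ _ _ _ (by omega : w.length ≤ i + w.length)]
    have e1 : i + w.length - w.length = i := by omega
    rw [e1, List.getD_append_right _ _ _ _ (by omega : w.length ≤ i)]
    rw [List.getD_append _ _ _ _ (by omega : i - w.length < w.length)]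
    subst ht
    rw [List.getD_append _ _ _ _ h2]

lemma build (T pre W : List Bool) (c : Bool) (hs : [c] <+: W) (hW : 1 ≤ W.length)
    (heq : T = pre ++ (W ++ (W ++ [c]))) :
    ∃ u p, u <:+: T ∧ 1 ≤ p ∧ HasPeriod u p ∧ 2 * p < u.length := by
  refine ⟨W ++ (W ++ [c]), W.length, ⟨pre, [], by simp [heq]⟩, hW, hp W [c] hs, ?_⟩
  simp; omega

lemma head_prefix (k : ℕ) (c : Bool) (r : List Bool) : [c] <+: mu^[k] ([c] ++ r) := by
  obtain ⟨t, ht⟩ := muk_head k c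
  exact ⟨t ++ mu^[k] r, by rw [muk_append, ht]; rfl⟩

lemma len_pos (k : ℕ) (u : List Bool) (hu : 1 ≤ u.length) : 1 ≤ (mu^[k] u).length := by
  rw [muk_length]
  have : 1 ≤ 2 ^ k := Nat.one_le_two_pow
  nlinarith

theorem extend_overlap (k : ℕ) (z : List Bool)
    (hz : z = [false, true, true, false, true, true] ∨
          z = [true, false, false, true, false, false]) (a : Bool) :
    ∃ u p, u <:+: (mu^[k] z ++ [a]) ∧ 1 ≤ p ∧ HasPeriod u p ∧ 2 * p < u.length := by
  rcases hz with rfl | rfl <;> cases a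
  · -- z = 011011, a = false : whole word, period |μ^k(011)|
    refine build _ [] (mu^[k] [false, true, true]) false
      (head_prefix k false [true, true]) (len_pos k _ (by simp)) ?_
    have : ([false, true, true, false, true, true] : List Bool)
        = [false, true, true] ++ [false, true, true] := rfl
    rw [this, muk_append]; simp
  · -- z = 011011, a = true : suffix μ^k(1)μ^k(1)1
    refine build _ (mu^[k] [false, true, true, false]) (mu^[k] [true]) true
      (head_prefix k true []) (len_pos k _ (by simp)) ?_
    have : ([false, true, true, false, true, true] : List Bool)
        = [false, true, true, false] ++ ([true] ++ [true]) := rfl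
    rw [this, muk_append, muk_append]; simp
  · -- z = 100100, a = false : suffix μ^k(0)μ^k(0)0
    refine build _ (mu^[k] [true, false, false, true]) (mu^[k] [false]) false
      (head_prefix k false []) (len_pos k _ (by simp)) ?_
    have : ([true, false, false, true, false, false] : List Bool)
        = [true, false, false, true] ++ ([false] ++ [false]) := rfl
    rw [this, muk_append, muk_append]; simp
  · -- z = 100100, a = true : whole word
    refine build _ [] (mu^[k] [true, false, false]) true
      (head_prefix k true [false, false]) (len_pos k _ (by simp)) ?_
    have : ([true, false, false, true, false, false] : List Bool)
        = [true, false, false] ++ [true, false, false] := rfl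
    rw [this, muk_append]; simp
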